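/- The normalized ground state of H_N^{(1,0)} (eigenvector for eigenvalue −2cos(π/(2N+3)) with unit ℓ² norm and positive entries) has its entry at position N (the end without the self-loop) of magnitude O(N^{−3/2}) and its entry at position 0 of magnitude Θ(N^{−1/2}): precisely, there exist constants c, C > 0 such that for all sufficiently large N the entry at N is at most C·N^{−3/2} and the entry at 0 is at least c·N^{−1/2}. -/

import Mathlib

open Matrix Real Finset

/-- The negative adjacency matrix of the path on vertices `0,…,N`. -/
noncomputable def walkM (N : ℕ) : Matrix (Fin (N+1)) (Fin (N+1)) ℝ :=
  Matrix.of fun i j => if (i:ℕ)+1 = (j:ℕ) ∨ (j:ℕ)+1 = (i:ℕ) then -1 else 0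

/-- `H_N^{(L,R)} = −L|0⟩⟨0| − R|N⟩⟨N| + H_N^walk`. -/
noncomputable def HLR (N : ℕ) (L R : ℝ) : Matrix (Fin (N+1)) (Fin (N+1)) ℝ :=
  walkM N + Matrix.single 0 0 (-L)
    + Matrix.single (Fin.last N) (Fin.last N) (-R)

/-- `μ` is an eigenvalue of the real matrix `M`. -/
def hasEig {n : Type*} [Fintype n] (M : Matrix n n ℝ) (μ : ℝ) : Prop :=
  ∃ v : n → ℝ, v ≠ 0 ∧ M.mulVec v = μ • v

lemma aux_sum_ind_single {n : ℕ} (v : Fin n → ℝ) (c : Fin n) (P : Fin n → Prop) [DecidablePred P]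
    (hP : ∀ j, P j ↔ j = c) :
    ∑ j, (if P j then (-1:ℝ) else 0) * v j = -v c := by
  have h : ∀ j, (if P j then (-1:ℝ) else 0) * v j = if j = c then -v j else 0 := by
    intro j; simp only [hP j]
    by_cases h : j = c <;> simp [h]
  rw [Finset.sum_congr rfl (fun j _ => h j), Finset.sum_ite_eq' univ c (fun j => -v j)]
  simp

lemma aux_sum_ind_pair {n : ℕ} (v : Fin n → ℝ) (c₁ c₂ : Fin n) (hne : c₁ ≠ c₂) (P : Fin n → Prop)
    [DecidablePred P] (hP : ∀ j, P j ↔ (j = c₁ ∨ j = c₂)) :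
    ∑ j, (if P j then (-1:ℝ) else 0) * v j = -v c₁ - v c₂ := by
  have h : ∀ j, (if P j then (-1:ℝ) else 0) * v j
      = (if j = c₁ then -v j else 0) + (if j = c₂ then -v j else 0) := by
    intro j; simp only [hP j]
    by_cases h1 : j = c₁ <;> by_cases h2 : j = c₂ <;> simp_all
  rw [Finset.sum_congr rfl (fun j _ => h j), Finset.sum_add_distrib,
    Finset.sum_ite_eq' univ c₁ (fun j => -v j), Finset.sum_ite_eq' univ c₂ (fun j => -v j)]
  simp [sub_eq_add_neg]

lemma aux_HLR_row_ne_zero {N : ℕ} (i j : Fin (N+1)) (hi : i ≠ 0) :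
    HLR N 1 0 i j = walkM N i j := by
  simp [HLR, Matrix.add_apply, Matrix.single, Ne.symm hi]

lemma aux_rowA {N : ℕ} (hN : 1 ≤ N) (v : Fin (N+1) → ℝ) (μ : ℝ)
    (h : (HLR N 1 0).mulVec v = μ • v) :
    -v ⟨N-1, by omega⟩ = μ * v (Fin.last N) := by
  have h0 := congrFun h (Fin.last N)
  simp only [mulVec, dotProduct, Pi.smul_apply, smul_eq_mul] at h0
  have hlast : (Fin.last N) ≠ (0 : Fin (N+1)) := by
    simp [Fin.ext_iff]; omega
  rw [Finset.sum_congr rfl (fun j _ => by rw [aux_HLR_row_ne_zero _ j hlast])] at h0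
  simp only [walkM, Matrix.of_apply, Fin.val_last] at h0
  rw [aux_sum_ind_single v ⟨N-1, by omega⟩ _ (fun j => by
    simp only [Fin.ext_iff]
    constructor
    · rintro (h | h) <;> omega
    · intro h; omega)] at h0
  exact h0

lemma aux_rowB {N : ℕ} (v : Fin (N+1) → ℝ) (μ : ℝ)
    (h : (HLR N 1 0).mulVec v = μ • v) (m : ℕ) (hm1 : 1 ≤ m) (hm2 : m + 1 ≤ N) :
    -v ⟨m-1, by omega⟩ - v ⟨m+1, by omega⟩ = μ * v ⟨m, by omega⟩ := by
  have h0 := congrFun h ⟨m, by omega⟩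
  simp only [mulVec, dotProduct, Pi.smul_apply, smul_eq_mul] at h0
  have hi : (⟨m, by omega⟩ : Fin (N+1)) ≠ 0 := by
    simp [Fin.ext_iff]; omega
  rw [Finset.sum_congr rfl (fun j _ => by rw [aux_HLR_row_ne_zero _ j hi])] at h0
  simp only [walkM, Matrix.of_apply] at h0
  rw [aux_sum_ind_pair v ⟨m+1, by omega⟩ ⟨m-1, by omega⟩ (by simp [Fin.ext_iff]; omega) _ (fun j => by
    simp only [Fin.ext_iff]
    constructor
    · rintro (h | h) <;> omega
    · rintro (h | h) <;> omega)] at h0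
  linarith [h0]

lemma aux_formula {N : ℕ} (hN : 1 ≤ N) (v : Fin (N+1) → ℝ)
    (heig : (HLR N 1 0).mulVec v = (-2 * Real.cos (π / (2 * N + 3))) • v) :
    ∀ k, k ≤ N → v ⟨N - k, by omega⟩ =
      v (Fin.last N) / Real.sin (π / (2 * N + 3)) * Real.sin (((k:ℝ)+1) * (π / (2 * N + 3))) := by
  set θ : ℝ := π / (2 * N + 3) with hθ
  set a : ℝ := v (Fin.last N) with ha
  have hθpos : 0 < θ := by
    apply div_pos Real.pi_pos; positivity
  have hθlt : θ < π := by
    rw [hθ, div_lt_iff₀ (by positivity)]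
    nlinarith [Real.pi_pos, Nat.cast_nonneg (α := ℝ) N]
  have hs : 0 < Real.sin θ := Real.sin_pos_of_pos_of_lt_pi hθpos hθlt
  have trig : ∀ x : ℝ, Real.sin (x + θ) = 2 * Real.cos θ * Real.sin x - Real.sin (x - θ) := by
    intro x; rw [Real.sin_add, Real.sin_sub]; ring
  set P : ℕ → Prop := fun k => k ≤ N → v ⟨N - k, by omega⟩ = a / Real.sin θ * Real.sin (((k:ℝ)+1) * θ) with hP
  suffices h : ∀ k, P k ∧ P (k+1) by intro k; exact (h k).1
  have base0 : P 0 := by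
    intro _
    have he : (⟨N - 0, by omega⟩ : Fin (N+1)) = Fin.last N := by
      simp [Fin.ext_iff]
    rw [he]
    rw [show ((0:ℕ):ℝ)+1 = 1 by norm_num, one_mul, div_mul_cancel₀ _ (ne_of_gt hs)]
  have base1 : P 1 := by
    intro _
    have h1 := aux_rowA hN v _ heig
    rw [show (((1:ℕ):ℝ)+1) * θ = 2 * θ by norm_num, Real.sin_two_mul,
      show a / Real.sin θ * (2 * Real.sin θ * Real.cos θ)
        = 2 * Real.cos θ * a * (Real.sin θ / Real.sin θ) by ring,
      div_self (ne_of_gt hs), mul_one]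
    linarith [h1]
  have step : ∀ k, P k → P (k+1) → P (k+2) := by
    intro k e2' e1' hk
    have e1 : v ⟨N - (k+1), by omega⟩ = a / Real.sin θ * Real.sin (((↑(k+1):ℝ)+1) * θ) :=
      e1' (by omega)
    have e2 : v ⟨N - k, by omega⟩ = a / Real.sin θ * Real.sin (((k:ℝ)+1) * θ) :=
      e2' (by omega)
    have hB := aux_rowB v _ heig (N - (k+1)) (by omega) (by omega)
    have i1 : (⟨N - (k+1) - 1, by omega⟩ : Fin (N+1)) = ⟨N - (k+2), by omega⟩ := by
      simp [Fin.ext_iff]; omega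
    have i2 : (⟨N - (k+1) + 1, by omega⟩ : Fin (N+1)) = ⟨N - k, by omega⟩ := by
      simp [Fin.ext_iff]; omega
    rw [i1, i2] at hB
    have step : v ⟨N - (k+2), by omega⟩
        = 2 * Real.cos θ * v ⟨N - (k+1), by omega⟩ - v ⟨N - k, by omega⟩ := by
      linarith [hB]
    have ht : Real.sin (((↑(k+2):ℝ)+1) * θ)
        = 2 * Real.cos θ * Real.sin (((↑(k+1):ℝ)+1) * θ) - Real.sin (((k:ℝ)+1) * θ) := by
      have h0 := trig (((k:ℝ)+2) * θ)
      rw [show ((k:ℝ)+2) * θ + θ = ((↑(k+2):ℝ)+1) * θ by push_cast; ring,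
        show ((k:ℝ)+2) * θ - θ = ((k:ℝ)+1) * θ by ring,
        show ((k:ℝ)+2) * θ = ((↑(k+1):ℝ)+1) * θ by push_cast; ring] at h0
      exact h0
    linear_combination step + 2 * Real.cos θ * e1 - e2 - a / Real.sin θ * ht
  intro k
  induction k with
  | zero => exact ⟨base0, base1⟩
  | succ k ih => exact ⟨ih.2, step k ih.1 ih.2⟩

/-- The normalized, entrywise-positive ground state of `H_N^{(1,0)}` (for the
eigenvalue `−2 cos (π/(2N+3))`) has entry at position `N` of size `O(N^{−3/2})`
and entry at position `0` of size `Ω(N^{−1/2})`. -/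
theorem stmt_12 :
    ∃ c C : ℝ, 0 < c ∧ 0 < C ∧ ∃ N₀ : ℕ, ∀ N : ℕ, N₀ ≤ N →
      ∀ v : Fin (N+1) → ℝ,
        (∑ x, v x ^ 2 = 1) → (∀ x, 0 < v x) →
        (HLR N 1 0).mulVec v = (-2 * Real.cos (π / (2 * N + 3))) • v →
        v (Fin.last N) ≤ C * (N : ℝ) ^ (-(3:ℝ)/2) ∧
        c * (N : ℝ) ^ (-(1:ℝ)/2) ≤ v 0 := by
  refine ⟨1/2, π, by norm_num, Real.pi_pos, 1, ?_⟩
  intro N hN v hnorm hpos heig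
  set θ : ℝ := π / (2 * N + 3) with hθ
  set a : ℝ := v (Fin.last N) with ha
  have hNR : (1:ℝ) ≤ (N:ℝ) := by exact_mod_cast hN
  have hq : (0:ℝ) < 2 * N + 3 := by positivity
  have hθpos : 0 < θ := by rw [hθ]; exact div_pos Real.pi_pos hq
  have hθlt : θ < π := by
    rw [hθ, div_lt_iff₀ hq]
    nlinarith [Real.pi_pos, Nat.cast_nonneg (α := ℝ) N]
  have hs : 0 < Real.sin θ := Real.sin_pos_of_pos_of_lt_pi hθpos hθlt
  have hapos : 0 < a := hpos _
  have hform := aux_formula hN v heig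
  have vx : ∀ x : Fin (N+1), v x = a / Real.sin θ * Real.sin ((↑(N - (x:ℕ)) + 1) * θ) := by
    intro x
    have hx : (x:ℕ) ≤ N := by omega
    have h0 := hform (N - (x:ℕ)) (by omega)
    have he : (⟨N - (N - (x:ℕ)), by omega⟩ : Fin (N+1)) = x := by
      simp [Fin.ext_iff]; omega
    rw [he] at h0
    exact h0
  set T : ℝ := ∑ x : Fin (N+1), Real.sin ((↑(N - (x:ℕ)) + 1) * θ)^2 with hT
  have hTnorm : (a / Real.sin θ)^2 * T = 1 := by
    have h0 : (a / Real.sin θ)^2 * T = ∑ x, v x ^ 2 := by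
      rw [hT, Finset.mul_sum]
      refine (Finset.sum_congr rfl ?_).symm
      intro x _
      rw [vx x]; ring
    rw [h0, hnorm]
  -- angle helper
  have angle_le : ∀ m : ℕ, 2*m ≤ 2*N+3 → (m:ℝ) * θ ≤ π/2 := by
    intro m hm
    rw [hθ, mul_div_assoc', div_le_div_iff₀ hq (by norm_num)]
    have : (2*m : ℝ) ≤ 2*N+3 := by exact_mod_cast hm
    nlinarith [Real.pi_pos]
  have angle_ge : ∀ m : ℕ, 2*N+3 ≤ 4*m → π/4 ≤ (m:ℝ) * θ := by
    intro m hm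
    rw [hθ, mul_div_assoc', div_le_div_iff₀ (by norm_num) hq]
    have : (2*N+3 : ℝ) ≤ 4*m := by exact_mod_cast hm
    nlinarith [Real.pi_pos]
  -- lower bound for T
  have Tlb : (N:ℝ)/4 ≤ T := by
    have hsub : ∀ k ∈ Finset.range (N/2+1), (1:ℝ)/2 ≤ Real.sin ((↑(N - k) + 1) * θ)^2 := by
      intro k hk
      simp only [Finset.mem_range] at hk
      have hk' : k ≤ N/2 := by omega
      rw [show ((N - k : ℕ):ℝ) + 1 = ((N - k + 1 : ℕ) : ℝ) by push_cast; ring]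
      have h1 : π/4 ≤ ((N - k + 1 : ℕ):ℝ) * θ := angle_ge _ (by omega)
      have h2 : ((N - k + 1 : ℕ):ℝ) * θ ≤ π/2 := angle_le _ (by omega)
      have h3 : Real.sqrt 2 / 2 ≤ Real.sin (((N - k + 1 : ℕ):ℝ) * θ) := by
        rw [← Real.sin_pi_div_four]
        exact Real.sin_le_sin_of_le_of_le_pi_div_two (by linarith [Real.pi_pos]) h2 h1
      nlinarith [Real.sq_sqrt (show (0:ℝ) ≤ 2 by norm_num), Real.sqrt_nonneg 2, h3]
    have hTsum : T = ∑ k ∈ Finset.range (N+1), Real.sin ((↑(N - k) + 1) * θ)^2 := by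
      rw [hT]
      exact Fin.sum_univ_eq_sum_range (fun k => Real.sin ((↑(N - k) + 1) * θ)^2) (N+1)
    calc (N:ℝ)/4 ≤ (↑(N/2+1) : ℝ) * (1/2) := by
            have hcast : (N:ℝ) ≤ 2*(↑(N/2+1) : ℝ) := by
              exact_mod_cast (show N ≤ 2*(N/2+1) by omega)
            linarith
      _ = ∑ _k ∈ Finset.range (N/2+1), (1/2:ℝ) := by
            rw [Finset.sum_const, Finset.card_range, nsmul_eq_mul]
      _ ≤ ∑ k ∈ Finset.range (N/2+1), Real.sin ((↑(N - k) + 1) * θ)^2 :=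
            Finset.sum_le_sum hsub
      _ ≤ ∑ k ∈ Finset.range (N+1), Real.sin ((↑(N - k) + 1) * θ)^2 :=
            Finset.sum_le_sum_of_subset_of_nonneg
              (Finset.range_subset_range.mpr (by omega)) (fun i _ _ => sq_nonneg _)
      _ = T := hTsum.symm
  have Tub : T ≤ (N:ℝ) + 1 := by
    calc T ≤ ∑ _x : Fin (N+1), (1:ℝ) :=
          Finset.sum_le_sum (fun i _ => Real.sin_sq_le_one _)
      _ = (N:ℝ) + 1 := by simp [Finset.card_univ]
  have hTpos : 0 < T := lt_of_lt_of_le (by linarith) Tlb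
  clear_value T θ
  clear heig hform
  have ha2 : a^2 * T = Real.sin θ^2 := by
    have h2 : ((a / Real.sin θ)^2 * T) * Real.sin θ^2 = a^2 * T := by
      field_simp
    rw [hTnorm, one_mul] at h2
    exact h2.symm
  -- upper bound on a
  have hsθ : Real.sin θ ≤ π / (2*(N:ℝ)) := by
    have h1 : Real.sin θ < θ := Real.sin_lt hθpos
    have h2 : θ ≤ π / (2*(N:ℝ)) := by
      rw [hθ]
      apply div_le_div_of_nonneg_left Real.pi_pos.le (by linarith) (by linarith)
    linarith
  have hs2 : Real.sin θ * (2*(N:ℝ)) ≤ π := by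
    rw [← le_div_iff₀ (by linarith)]
    exact hsθ
  have h3 : Real.sin θ^2 * (4*(N:ℝ)^2) ≤ π^2 := by
    have hss := mul_le_mul hs2 hs2 (by positivity) Real.pi_pos.le
    linear_combination hss
  have h1 : a^2 * ((N:ℝ)/4) ≤ Real.sin θ^2 := by
    nlinarith only [sq_nonneg a, Tlb, ha2]
  have h4 : a^2 * (N:ℝ)^3 ≤ π^2 := by
    have hmul := mul_le_mul_of_nonneg_right h1 (show (0:ℝ) ≤ 4*(N:ℝ)^2 by positivity)
    calc a^2 * (N:ℝ)^3 = a^2 * ((N:ℝ)/4) * (4*(N:ℝ)^2) := by ring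
      _ ≤ Real.sin θ^2 * (4*(N:ℝ)^2) := hmul
      _ ≤ π^2 := h3
  have hNpos : (0:ℝ) < (N:ℝ) := by linarith
  have hb : (π * (N:ℝ)^(-(3:ℝ)/2))^2 = π^2 / (N:ℝ)^3 := by
    rw [mul_pow, ← Real.rpow_natCast ((N:ℝ)^(-(3:ℝ)/2)) 2, ← Real.rpow_mul (Nat.cast_nonneg N)]
    norm_num
    ring
  have hub : v (Fin.last N) ≤ π * (N:ℝ)^(-(3:ℝ)/2) := by
    have hsq : a^2 ≤ (π * (N:ℝ)^(-(3:ℝ)/2))^2 := by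
      rw [hb, le_div_iff₀ (by positivity)]
      exact h4
    have h5 := Real.sqrt_le_sqrt hsq
    rwa [Real.sqrt_sq hapos.le, Real.sqrt_sq (by positivity)] at h5
  refine ⟨hub, ?_⟩
  -- lower bound on v 0
  have hv0 : v 0 = a / Real.sin θ * Real.sin (((N:ℝ) + 1) * θ) := by
    have h0 := vx 0
    simpa using h0
  have hS0 : Real.sqrt 3 / 2 ≤ Real.sin (((N:ℝ) + 1) * θ) := by
    rw [← Real.sin_pi_div_three]
    have hy2 : ((N:ℝ) + 1) * θ ≤ π/2 := by
      have := angle_le (N+1) (by omega)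
      rwa [show ((N+1:ℕ):ℝ) = (N:ℝ)+1 by push_cast; ring] at this
    have hxy : π/3 ≤ ((N:ℝ) + 1) * θ := by
      rw [hθ, mul_div_assoc', div_le_div_iff₀ (by norm_num) hq]
      nlinarith only [Real.pi_pos, hNR]
    exact Real.sin_le_sin_of_le_of_le_pi_div_two (by linarith [Real.pi_pos]) hy2 hxy
  have hv0T : (v 0)^2 * T = Real.sin (((N:ℝ)+1) * θ)^2 := by
    rw [hv0]
    calc (a / Real.sin θ * Real.sin (((N:ℝ)+1)*θ))^2 * T
        = ((a / Real.sin θ)^2 * T) * Real.sin (((N:ℝ)+1)*θ)^2 := by ring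
      _ = Real.sin (((N:ℝ)+1)*θ)^2 := by rw [hTnorm, one_mul]
  have h34 : (3:ℝ)/4 ≤ Real.sin (((N:ℝ)+1)*θ)^2 := by
    nlinarith only [hS0, Real.sq_sqrt (show (0:ℝ) ≤ 3 by norm_num), Real.sqrt_nonneg 3]
  have h6 : (3:ℝ)/4 ≤ (v 0)^2 * T := by rw [hv0T]; exact h34
  have hT2 : T ≤ 2*(N:ℝ) := by linarith
  have h7 : (v 0)^2 * T ≤ (v 0)^2 * (2*(N:ℝ)) := mul_le_mul_of_nonneg_left hT2 (sq_nonneg _)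
  have h5 : 1/(4*(N:ℝ)) ≤ (v 0)^2 := by
    rw [div_le_iff₀ (by positivity)]
    nlinarith only [h6, h7]
  have hc2 : ((1:ℝ)/2 * (N:ℝ)^(-(1:ℝ)/2))^2 = 1/(4*(N:ℝ)) := by
    rw [mul_pow, ← Real.rpow_natCast ((N:ℝ)^(-(1:ℝ)/2)) 2, ← Real.rpow_mul (Nat.cast_nonneg N)]
    norm_num
    rw [show (-(1:ℝ)) = -((1:ℕ):ℝ) by norm_num, Real.rpow_neg (Nat.cast_nonneg N),
      Real.rpow_natCast]
    field_simp
  have hsq : ((1:ℝ)/2 * (N:ℝ)^(-(1:ℝ)/2))^2 ≤ (v 0)^2 := by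
    rw [hc2]; exact h5
  have h8 := Real.sqrt_le_sqrt hsq
  rwa [Real.sqrt_sq (by positivity), Real.sqrt_sq (hpos 0).le] at h8
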